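/- Let N ≥ 1, p > 1, g : ℝ → ℝ nonnegative, nondecreasing and locally Lipschitz, and u a radial solution of -Δ_p u = g(u) on the punctured unit ball with u_r(r) < 0 for all r ∈ (0,1). Then max_{t∈[1/2,1]} |u_r(t)| ≤ 2^{N/(p-1)} min_{t∈[1/2,1]} |u_r(t)|. -/

import Mathlib

open Real Set
open Filter Topology

lemma mono_aux {f f' : ℝ → ℝ} {a b : ℝ} (hab : a ≤ b)
    (hf : ∀ x ∈ Icc a b, HasDerivAt f (f' x) x)
    (h0 : ∀ x ∈ Icc a b, 0 ≤ f' x) : f a ≤ f b := by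
  have hmono : MonotoneOn f (Icc a b) := by
    apply monotoneOn_of_deriv_nonneg (convex_Icc a b)
    · exact fun x hx => (hf x hx).continuousAt.continuousWithinAt
    · intro x hx
      rw [interior_Icc] at hx
      exact (hf x (Ioo_subset_Icc_self hx)).differentiableAt.differentiableWithinAt
    · intro x hx
      rw [interior_Icc] at hx
      rw [(hf x (Ioo_subset_Icc_self hx)).deriv]
      exact h0 x (Ioo_subset_Icc_self hx)
  exact hmono (left_mem_Icc.2 hab) (right_mem_Icc.2 hab) hab


/-- For a radial solution of `-Δ_p u = g(u)` on the punctured unit ball with `u_r < 0`,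
where `g ≥ 0` is nondecreasing and locally Lipschitz,
`max_{t∈[1/2,1]} |u_r(t)| ≤ 2^{N/(p-1)} min_{t∈[1/2,1]} |u_r(t)|`. -/
theorem max_le_min_on_annulus
    (N p : ℝ) (hN : 1 ≤ N) (hp : 1 < p)
    (g : ℝ → ℝ) (hg0 : ∀ x, 0 ≤ g x) (hgmono : Monotone g)
    (hglip : LocallyLipschitz g)
    (u u' : ℝ → ℝ)
    (hu : ∀ r ∈ Ioc (0:ℝ) 1, HasDerivAt u (u' r) r)
    (hu'neg : ∀ r ∈ Ioc (0:ℝ) 1, u' r < 0)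
    (heq : ∀ r ∈ Ioc (0:ℝ) 1,
      HasDerivAt (fun s => s ^ (N - 1) * |u' s| ^ (p - 1))
        (r ^ (N - 1) * g (u r)) r) :
    ∀ s ∈ Icc (1/2 : ℝ) 1, ∀ t ∈ Icc (1/2 : ℝ) 1,
      |u' t| ≤ 2 ^ (N / (p - 1)) * |u' s| := by
  intro s hs t ht
  have hp1 : (0:ℝ) < p - 1 := by linarith
  have hN1 : (0:ℝ) ≤ N - 1 := by linarith
  have hN0 : (0:ℝ) < N := by linarith
  set F : ℝ → ℝ := fun r => |u' r| ^ (p-1) with hF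
  set H : ℝ → ℝ := fun r => r ^ (N-1) * F r with hHdef
  have heqH : ∀ r ∈ Ioc (0:ℝ) 1, HasDerivAt H (r ^ (N - 1) * g (u r)) r := heq
  have hF0 : ∀ r, 0 ≤ F r := fun r => Real.rpow_nonneg (abs_nonneg _) _
  have hH0 : ∀ r, 0 < r → 0 ≤ H r := fun r hr =>
    mul_nonneg (Real.rpow_nonneg hr.le _) (hF0 r)
  -- u is antitone
  have hu_anti : ∀ x ∈ Ioc (0:ℝ) 1, ∀ y ∈ Ioc (0:ℝ) 1, x ≤ y → u y ≤ u x := by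
    intro x hx y hy hxy
    have h := mono_aux (f := fun r => -u r) (f' := fun r => -(u' r)) hxy
      (fun z hz => (hu z ⟨lt_of_lt_of_le hx.1 hz.1, le_trans hz.2 hy.2⟩).neg)
      (fun z hz => by
        have := hu'neg z ⟨lt_of_lt_of_le hx.1 hz.1, le_trans hz.2 hy.2⟩
        show (0:ℝ) ≤ -(u' z)
        linarith)
    simpa using h
  -- key inequality : g(u b) * b^N ≤ N * H b
  have key : ∀ b ∈ Ioc (0:ℝ) 1, g (u b) * b ^ N ≤ N * H b := by
    intro b hb
    have hstep : ∀ a ∈ Ioo (0:ℝ) b, g (u b) * b ^ N ≤ N * H b + g (u b) * a ^ N := by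
      intro a ha
      have hsub : ∀ z, z ∈ Icc a b → z ∈ Ioc (0:ℝ) 1 :=
        fun z hz => ⟨lt_of_lt_of_le ha.1 hz.1, le_trans hz.2 hb.2⟩
      have h1 := mono_aux (f := fun r => N * H r - g (u b) * r ^ N)
        (f' := fun z => N * (z ^ (N-1) * g (u z)) - g (u b) * (N * z ^ (N-1))) ha.2.le
        (fun z hz => by
          have hz' := hsub z hz
          have hrp : HasDerivAt (fun r : ℝ => r ^ N) (N * z ^ (N-1)) z :=
            Real.hasDerivAt_rpow_const (Or.inl hz'.1.ne')
          exact ((heqH z hz').const_mul N).sub (hrp.const_mul (g (u b))))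
        (fun z hz => by
          have hz' := hsub z hz
          have hub : g (u b) ≤ g (u z) := hgmono (hu_anti z hz' b hb hz.2)
          have hzp : (0:ℝ) ≤ z ^ (N-1) := Real.rpow_nonneg hz'.1.le _
          have := mul_nonneg (mul_nonneg hN0.le hzp) (sub_nonneg.2 hub)
          show (0:ℝ) ≤ N * (z ^ (N-1) * g (u z)) - g (u b) * (N * z ^ (N-1))
          nlinarith)
      have hHa := mul_nonneg hN0.le (hH0 a ha.1)
      linarith
    have htend : Tendsto (fun a : ℝ => N * H b + g (u b) * a ^ N) (𝓝[>] (0:ℝ))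
        (𝓝 (N * H b + g (u b) * (0:ℝ) ^ N)) := by
      apply Tendsto.mono_left _ nhdsWithin_le_nhds
      exact (continuousAt_const.add
        ((Real.continuousAt_rpow_const 0 N (Or.inr hN0.le)).const_mul _))
    have hev : ∀ᶠ a in 𝓝[>] (0:ℝ), g (u b) * b ^ N ≤ N * H b + g (u b) * a ^ N :=
      Filter.eventually_of_mem (Ioo_mem_nhdsGT_of_mem ⟨le_refl 0, hb.1⟩) hstep
    have hg2 := ge_of_tendsto htend hev
    rw [Real.zero_rpow hN0.ne'] at hg2
    linarith
  -- positivity facts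
  have hs0 : (0:ℝ) < s := lt_of_lt_of_le (by norm_num) hs.1
  have ht0 : (0:ℝ) < t := lt_of_lt_of_le (by norm_num) ht.1
  have hsI : s ∈ Ioc (0:ℝ) 1 := ⟨hs0, hs.2⟩
  have htI : t ∈ Ioc (0:ℝ) 1 := ⟨ht0, ht.2⟩
  have hA : (0:ℝ) < t ^ (N-1) := Real.rpow_pos_of_pos ht0 _
  have hB : (0:ℝ) < s ^ (N-1) := Real.rpow_pos_of_pos hs0 _
  have hsN : s ^ (N-1) * s = s ^ N := by
    have h := (Real.rpow_add hs0 (N-1) 1).symm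
    rw [Real.rpow_one] at h
    rw [h]; ring_nf
  have htN : t ^ (N-1) * t = t ^ N := by
    have h := (Real.rpow_add ht0 (N-1) 1).symm
    rw [Real.rpow_one] at h
    rw [h]; ring_nf
  have h2N : (2:ℝ) ^ (N-1) ≤ 2 ^ N :=
    Real.rpow_le_rpow_of_exponent_le (by norm_num) (by linarith)
  have h21 : (2:ℝ) ≤ 2 ^ N := by
    calc (2:ℝ) = 2 ^ (1:ℝ) := (Real.rpow_one 2).symm
    _ ≤ 2 ^ N := Real.rpow_le_rpow_of_exponent_le (by norm_num) hN
  -- main inequality : F t ≤ 2^N * F s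
  have hmain : F t ≤ 2 ^ N * F s := by
    rcases le_total t s with hts | hst
    · -- t ≤ s : use monotonicity of H
      have hHm : H t ≤ H s := mono_aux hts
        (fun z hz => heqH z ⟨lt_of_lt_of_le ht0 hz.1, le_trans hz.2 hs.2⟩)
        (fun z hz => mul_nonneg (Real.rpow_nonneg (le_trans ht0.le hz.1) _) (hg0 _))
      have hsle : s ^ (N-1) ≤ 1 := Real.rpow_le_one hs0.le hs.2 hN1
      have htge : ((1:ℝ)/2) ^ (N-1) ≤ t ^ (N-1) :=
        Real.rpow_le_rpow (by norm_num) ht.1 hN1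
      have hprod : ((1:ℝ)/2) ^ (N-1) * 2 ^ (N-1) = 1 := by
        rw [← Real.mul_rpow (by norm_num) (by norm_num)]
        norm_num
      have h2p : (0:ℝ) < (2:ℝ) ^ (N-1) := Real.rpow_pos_of_pos (by norm_num) _
      have h1 : ((1:ℝ)/2) ^ (N-1) * F t ≤ F s := by
        calc ((1:ℝ)/2) ^ (N-1) * F t ≤ t ^ (N-1) * F t :=
              mul_le_mul_of_nonneg_right htge (hF0 t)
        _ ≤ s ^ (N-1) * F s := hHm
        _ ≤ F s := by nlinarith [hF0 s]
      have h2 : (2:ℝ) ^ (N-1) * (((1:ℝ)/2) ^ (N-1) * F t) ≤ 2 ^ (N-1) * F s :=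
        mul_le_mul_of_nonneg_left h1 h2p.le
      have h3 : (2:ℝ) ^ (N-1) * (((1:ℝ)/2) ^ (N-1) * F t) = F t := by
        linear_combination F t * hprod
      have h4 : (2:ℝ) ^ (N-1) * F s ≤ 2 ^ N * F s :=
        mul_le_mul_of_nonneg_right h2N (hF0 s)
      linarith
    · -- s ≤ t : use the key inequality
      have hsub : ∀ z, z ∈ Icc s t → z ∈ Ioc (0:ℝ) 1 :=
        fun z hz => ⟨lt_of_lt_of_le hs0 hz.1, le_trans hz.2 ht.2⟩
      have h1 := mono_aux (f := fun r => g (u s) * r ^ N - N * H r)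
        (f' := fun z => g (u s) * (N * z ^ (N-1)) - N * (z ^ (N-1) * g (u z))) hst
        (fun z hz => by
          have hz' := hsub z hz
          have hrp : HasDerivAt (fun r : ℝ => r ^ N) (N * z ^ (N-1)) z :=
            Real.hasDerivAt_rpow_const (Or.inl hz'.1.ne')
          exact (hrp.const_mul (g (u s))).sub ((heqH z hz').const_mul N))
        (fun z hz => by
          have hz' := hsub z hz
          have hub : g (u z) ≤ g (u s) := hgmono (hu_anti s hsI z hz' hz.1)
          have hzp : (0:ℝ) ≤ z ^ (N-1) := Real.rpow_nonneg hz'.1.le _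
          have := mul_nonneg (mul_nonneg hN0.le hzp) (sub_nonneg.2 hub)
          show (0:ℝ) ≤ g (u s) * (N * z ^ (N-1)) - N * (z ^ (N-1) * g (u z))
          nlinarith)
      have hkey := key s hsI
      have hABs : s ^ (N-1) * s ≤ t ^ (N-1) * t := by
        rw [hsN, htN]; exact Real.rpow_le_rpow hs0.le hst hN0.le
      rw [← hsN, ← htN] at h1
      rw [← hsN] at hkey
      rw [hHdef] at h1 hkey
      dsimp only at h1 hkey
      -- cancel s^(N-1) in hkey : g(u s) * s ≤ N * F s
      have hGss : g (u s) * s ≤ N * F s := by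
        have h' : s ^ (N-1) * (g (u s) * s) ≤ s ^ (N-1) * (N * F s) := by linarith
        exact le_of_mul_le_mul_left h' hB
      have hm1 : g (u s) * s * (t ^ (N-1) * t - s ^ (N-1) * s)
          ≤ N * F s * (t ^ (N-1) * t - s ^ (N-1) * s) :=
        mul_le_mul_of_nonneg_right hGss (sub_nonneg.2 hABs)
      have hm2 := mul_le_mul_of_nonneg_left h1 hs0.le
      have hm3 : N * t ^ (N-1) * (s * F t) ≤ N * t ^ (N-1) * (F s * t) := by nlinarith
      have hm4 : s * F t ≤ F s * t :=
        le_of_mul_le_mul_left hm3 (by positivity)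
      have ht2s : t ≤ 2 * s := by linarith [ht.2, hs.1]
      have hm5 : F s * t ≤ F s * (2 * s) := mul_le_mul_of_nonneg_left ht2s (hF0 s)
      have hm6 : s * F t ≤ s * (2 * F s) := by linarith
      have hm7 : F t ≤ 2 * F s := le_of_mul_le_mul_left hm6 hs0
      nlinarith [hF0 s]
  -- conclude
  have hexp : (0:ℝ) ≤ 1 / (p-1) := by positivity
  have hfin := Real.rpow_le_rpow (hF0 t) hmain hexp
  have hL : ∀ r : ℝ, (F r) ^ (1/(p-1)) = |u' r| := by
    intro r
    rw [hF]
    dsimp only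
    rw [← Real.rpow_mul (abs_nonneg _), mul_one_div, div_self hp1.ne', Real.rpow_one]
  have hR : ((2:ℝ) ^ N * F s) ^ (1/(p-1)) = 2 ^ (N/(p-1)) * |u' s| := by
    rw [Real.mul_rpow (by positivity) (hF0 s), ← Real.rpow_mul (by norm_num : (0:ℝ) ≤ 2),
      mul_one_div, hL s]
  rw [hL t, hR] at hfin
  exact hfin
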